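/- Let Γ = ⟨α_1, …, α_k⟩ ⊂ ℕ^d be an affine semigroup, 𝕂 a field, and let G be a reduced Gröbner basis of the defining ideal I_{Γ_H} ⊂ 𝕂[t, y_1, …, y_k] of Γ_H with respect to a lexicographic monomial order in which t is greater than every y_i. Then Δ(Γ) = { j ≥ 1 : G contains an element of the form t^j y^z − y^w for some z, w ∈ ℕ^k }. -/

import Mathlib

open Finset

/-- The factorization homomorphism `φ_Γ : ℕ^k → ℕ^d` determined by the
generators `α 1, …, α k`. -/
def phi {d k : ℕ} (α : Fin k → Fin d → ℕ) (z : Fin k → ℕ) : Fin d → ℕ :=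
  ∑ i, z i • α i

/-- The length `|z|` of a factorization. -/
def len {k : ℕ} (z : Fin k → ℕ) : ℕ := ∑ i, z i

/-- The length set `L_Γ(γ)`. -/
def lengthSet {d k : ℕ} (α : Fin k → Fin d → ℕ) (γ : Fin d → ℕ) : Set ℕ :=
  len '' {z | phi α z = γ}

/-- The set of successive differences (gaps) of a set of naturals. -/
def deltaOf (L : Set ℕ) : Set ℕ :=
  {δ | 0 < δ ∧ ∃ a, a ∈ L ∧ a + δ ∈ L ∧ ∀ c ∈ L, ¬(a < c ∧ c < a + δ)}

/-- The delta set `Δ(Γ)` of the affine semigroup generated by `α`. -/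
def deltaSet {d k : ℕ} (α : Fin k → Fin d → ℕ) : Set ℕ :=
  ⋃ γ ∈ Set.range (phi α), deltaOf (lengthSet α γ)

/-- The monomial `y^z = y_1^{z_1} ⋯ y_k^{z_k}` in `𝕂[y_1,…,y_k]`. -/
noncomputable def monoY (𝕂 : Type*) [CommSemiring 𝕂] {k : ℕ} (z : Fin k → ℕ) :
    MvPolynomial (Fin k) 𝕂 :=
  MvPolynomial.monomial (Finsupp.equivFunOnFinite.symm z) 1

/-- The ideal `I_j = ⟨y^z − y^w : φ_Γ(z) = φ_Γ(w), ||z|−|w|| ≤ j⟩`. -/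
noncomputable def idealI (𝕂 : Type*) [Field 𝕂] {d k : ℕ} (α : Fin k → Fin d → ℕ)
    (j : ℕ) : Ideal (MvPolynomial (Fin k) 𝕂) :=
  Ideal.span {f | ∃ z w : Fin k → ℕ, phi α z = phi α w ∧
    Nat.dist (len z) (len w) ≤ j ∧ f = monoY 𝕂 z - monoY 𝕂 w}

/-! We work in `𝕂[t, y_1, …, y_k] = MvPolynomial (Fin (k+1)) 𝕂`, where the
variable indexed by `0` is `t` and the variable indexed by `i+1` is `y_i`.
The lexicographic order on exponent vectors `Fin (k+1) →₀ ℕ` (via `Finsupp.Lex`,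
comparing the exponent of `t` first) is then a lexicographic monomial order in
which `t` is greater than every `y_i`. -/

/-- The exponent vector of the monomial `t^i y^z`. -/
noncomputable def expTY {k : ℕ} (i : ℕ) (z : Fin k → ℕ) : Fin (k + 1) →₀ ℕ :=
  Finsupp.equivFunOnFinite.symm (Fin.cons i z)

/-- The monomial `t^i y^z` in `𝕂[t, y_1, …, y_k]`. -/
noncomputable def monoT (𝕂 : Type*) [CommSemiring 𝕂] {k : ℕ} (i : ℕ) (z : Fin k → ℕ) :
    MvPolynomial (Fin (k + 1)) 𝕂 :=
  MvPolynomial.monomial (expTY i z) 1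

/-- The leading (initial) exponent of `f` with respect to the lexicographic
order with `t` greatest. -/
noncomputable def leadExp {𝕂 : Type*} [CommSemiring 𝕂] {k : ℕ}
    (f : MvPolynomial (Fin (k + 1)) 𝕂) : Fin (k + 1) →₀ ℕ :=
  ofLex (f.support.sup toLex)

/-- The initial term of `f` with respect to the lexicographic order with `t`
greatest. -/
noncomputable def initTerm {𝕂 : Type*} [CommSemiring 𝕂] {k : ℕ}
    (f : MvPolynomial (Fin (k + 1)) 𝕂) : MvPolynomial (Fin (k + 1)) 𝕂 :=
  MvPolynomial.monomial (leadExp f) (MvPolynomial.coeff (leadExp f) f)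

/-- `G` is a Gröbner basis of `I` (w.r.t. the lex order with `t` greatest):
`G` generates `I` and the initial terms of elements of `G` generate the ideal
generated by the initial terms of all nonzero elements of `I`. -/
def IsGroebnerBasis {𝕂 : Type*} [Field 𝕂] {k : ℕ}
    (I : Ideal (MvPolynomial (Fin (k + 1)) 𝕂))
    (G : Set (MvPolynomial (Fin (k + 1)) 𝕂)) : Prop :=
  G ⊆ (I : Set (MvPolynomial (Fin (k + 1)) 𝕂)) ∧ Ideal.span G = I ∧
    Ideal.span (initTerm '' G) = Ideal.span (initTerm '' {f | f ∈ I ∧ f ≠ 0})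

/-- `G` is reduced: every element is monic and no monomial occurring in an
element of `G` is divisible by the initial monomial of a different element. -/
def IsReducedGB {𝕂 : Type*} [Field 𝕂] {k : ℕ}
    (G : Set (MvPolynomial (Fin (k + 1)) 𝕂)) : Prop :=
  (∀ g ∈ G, MvPolynomial.coeff (leadExp g) g = 1) ∧
    ∀ g ∈ G, ∀ g' ∈ G, g' ≠ g → ∀ m ∈ g.support, ¬ leadExp g' ≤ m

/-- The defining ideal `I_{Γ_H}` of
`Γ_H = ⟨(1,0), (1,α_1), …, (1,α_k)⟩ ⊂ ℕ^{1+d}`, namely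
`⟨t^{|w|−|z|} y^z − y^w : φ_Γ(z) = φ_Γ(w), |z| ≤ |w|⟩`. -/
noncomputable def idealGH (𝕂 : Type*) [Field 𝕂] {d k : ℕ}
    (α : Fin k → Fin d → ℕ) : Ideal (MvPolynomial (Fin (k + 1)) 𝕂) :=
  Ideal.span {f | ∃ z w : Fin k → ℕ, phi α z = phi α w ∧ len z ≤ len w ∧
    f = monoT 𝕂 (len w - len z) z - monoT 𝕂 0 w}
section Aux
open MvPolynomial

variable {𝕂 : Type*} [Field 𝕂] {d k : ℕ}

@[simp] lemma expTY_apply_zero (i : ℕ) (z : Fin k → ℕ) : expTY i z 0 = i := by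
  simp [expTY]

@[simp] lemma expTY_apply_succ (i : ℕ) (z : Fin k → ℕ) (l : Fin k) :
    expTY i z l.succ = z l := by
  simp [expTY]

lemma expTY_eta (e : Fin (k+1) →₀ ℕ) : expTY (e 0) (fun l => e l.succ) = e := by
  ext a
  induction a using Fin.cases <;> simp

lemma expTY_inj {i i' : ℕ} {z z' : Fin k → ℕ} (h : expTY i z = expTY i' z') :
    i = i' ∧ z = z' := by
  constructor
  · have := congrArg (fun f => f 0) h; simpa using this
  · funext l; have := congrArg (fun f => f l.succ) h; simpa using this

lemma expTY_add_single (a c : ℕ) (z : Fin k → ℕ) :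
    expTY a z + Finsupp.single 0 c = expTY (a + c) z := by
  ext x
  induction x using Fin.cases with
  | zero => simp
  | succ l => simp [Finsupp.single_apply, (Fin.succ_ne_zero l).symm]

lemma single_add_expTY (c a : ℕ) (z : Fin k → ℕ) :
    Finsupp.single (0 : Fin (k+1)) c + expTY a z = expTY (c + a) z := by
  ext x
  induction x using Fin.cases with
  | zero => simp
  | succ l => simp [Finsupp.single_apply, (Fin.succ_ne_zero l).symm]

lemma expTY_add (a b : ℕ) (z w : Fin k → ℕ) :
    expTY a z + expTY b w = expTY (a + b) (z + w) := by
  ext x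
  induction x using Fin.cases <;> simp

lemma expTY_le_iff {a b : ℕ} {z u : Fin k → ℕ} :
    expTY a z ≤ expTY b u ↔ a ≤ b ∧ ∀ l, z l ≤ u l := by
  rw [Finsupp.le_def]
  constructor
  · intro h
    exact ⟨by simpa using h 0, fun l => by simpa using h l.succ⟩
  · rintro ⟨h1, h2⟩ x
    induction x using Fin.cases <;> simp [h1, h2]

lemma toLex_expTY_lt {a b : ℕ} (h : a < b) (z u : Fin k → ℕ) :
    toLex (expTY a z) < toLex (expTY b u) := by
  refine Finsupp.Lex.lt_iff.mpr ⟨0, ?_, ?_⟩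
  · intro j hj; exact absurd hj ((Fin.zero_le j).not_gt)
  · simpa using h

end Aux
section Aux2
open MvPolynomial

variable {𝕂 : Type*} [Field 𝕂] {d k : ℕ}

/-- degrees of the variables in `Γ_H`. -/
def vdeg (α : Fin k → Fin d → ℕ) : Fin (k+1) → ℕ × (Fin d → ℕ) :=
  Fin.cases (1, 0) (fun l => (1, α l))

/-- the `Γ_H`-degree of an exponent vector. -/
def piH (α : Fin k → Fin d → ℕ) (e : Fin (k+1) →₀ ℕ) : ℕ × (Fin d → ℕ) :=
  ∑ s, e s • vdeg α s

lemma piH_expTY (α : Fin k → Fin d → ℕ) (i : ℕ) (z : Fin k → ℕ) :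
    piH α (expTY i z) = (i + len z, phi α z) := by
  rw [piH, Fin.sum_univ_succ]
  simp only [expTY_apply_zero, expTY_apply_succ, vdeg, Fin.cases_zero, Fin.cases_succ]
  apply Prod.ext
  · simp [Prod.fst_sum, len]
  · simp [Prod.snd_sum, phi]

/-- the algebra map recording the `Γ_H`-degree. -/
noncomputable def PhiH (𝕂 : Type*) [Field 𝕂] {d k : ℕ} (α : Fin k → Fin d → ℕ) :
    MvPolynomial (Fin (k+1)) 𝕂 →ₐ[𝕂] AddMonoidAlgebra 𝕂 (ℕ × (Fin d → ℕ)) :=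
  aeval (fun s => AddMonoidAlgebra.single (vdeg α s) 1)

lemma PhiH_monomial (α : Fin k → Fin d → ℕ) (e : Fin (k+1) →₀ ℕ) (c : 𝕂) :
    PhiH 𝕂 α (monomial e c) = AddMonoidAlgebra.single (piH α e) c := by
  rw [PhiH, aeval_monomial]
  have h1 : (e.prod fun s n => (AddMonoidAlgebra.single (vdeg α s) (1:𝕂)) ^ n)
      = ∏ s, (AddMonoidAlgebra.single (vdeg α s) (1:𝕂)) ^ (e s) :=
    Finsupp.prod_fintype _ _ (fun s => pow_zero _)
  have h2 : ∀ s : Fin (k+1), (AddMonoidAlgebra.single (vdeg α s) (1:𝕂)) ^ (e s)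
      = AddMonoidAlgebra.single (e s • vdeg α s) 1 := by
    intro s
    rw [AddMonoidAlgebra.single_pow, one_pow]
  rw [h1]
  simp only [h2]
  rw [AddMonoidAlgebra.prod_single]
  simp only [Finset.prod_const_one]
  have : (algebraMap 𝕂 (AddMonoidAlgebra 𝕂 (ℕ × (Fin d → ℕ)))) c
      = AddMonoidAlgebra.single 0 c := rfl
  rw [this, AddMonoidAlgebra.single_mul_single, zero_add, mul_one, piH]

lemma PhiH_monoT (α : Fin k → Fin d → ℕ) (i : ℕ) (z : Fin k → ℕ) :
    PhiH 𝕂 α (monoT 𝕂 i z) = AddMonoidAlgebra.single (i + len z, phi α z) (1:𝕂) := by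
  rw [monoT, PhiH_monomial, piH_expTY]

lemma idealGH_le_ker (α : Fin k → Fin d → ℕ) :
    idealGH 𝕂 α ≤ RingHom.ker (PhiH 𝕂 α).toRingHom := by
  rw [idealGH, Ideal.span_le]
  rintro f ⟨z, w, hphi, hlen, rfl⟩
  simp only [SetLike.mem_coe, RingHom.mem_ker, AlgHom.toRingHom_eq_coe, RingHom.coe_coe,
    map_sub, PhiH_monoT]
  rw [Nat.sub_add_cancel hlen, zero_add, hphi, sub_self]

lemma phiH_eq_zero_of_mem {α : Fin k → Fin d → ℕ} {f : MvPolynomial (Fin (k+1)) 𝕂}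
    (hf : f ∈ idealGH 𝕂 α) : PhiH 𝕂 α f = 0 :=
  idealGH_le_ker α hf

end Aux2
section Aux3
open MvPolynomial

variable {𝕂 : Type*} [Field 𝕂] {d k : ℕ}

lemma PhiH_coeff (α : Fin k → Fin d → ℕ) (f : MvPolynomial (Fin (k+1)) 𝕂)
    (c : ℕ × (Fin d → ℕ)) :
    (PhiH 𝕂 α f).coeff c = ∑ e ∈ f.support.filter (fun e => piH α e = c), coeff e f := by
  conv_lhs => rw [f.as_sum, map_sum]
  rw [AddMonoidAlgebra.coeff_sum, Finsupp.finset_sum_apply, Finset.sum_filter]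
  apply Finset.sum_congr rfl
  intro e _
  rw [PhiH_monomial, AddMonoidAlgebra.coeff_single, Finsupp.single_apply]

/-- for `f` in the toric ideal, every monomial in the support has a partner
in the same fiber. -/
lemma exists_partner {α : Fin k → Fin d → ℕ} {f : MvPolynomial (Fin (k+1)) 𝕂}
    (hf : f ∈ idealGH 𝕂 α) {e : Fin (k+1) →₀ ℕ} (he : e ∈ f.support) :
    ∃ e' ∈ f.support, e' ≠ e ∧ piH α e' = piH α e := by
  by_contra hcon
  push_neg at hcon
  have h0 : (PhiH 𝕂 α f).coeff (piH α e) = 0 := by rw [phiH_eq_zero_of_mem hf]; rfl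
  rw [PhiH_coeff] at h0
  have hfil : f.support.filter (fun e' => piH α e' = piH α e) = {e} := by
    apply Finset.ext
    intro x
    simp only [Finset.mem_filter, Finset.mem_singleton]
    constructor
    · rintro ⟨hx1, hx2⟩
      by_contra hxe
      exact (hcon x hx1 hxe) hx2
    · rintro rfl
      exact ⟨he, rfl⟩
  rw [hfil, Finset.sum_singleton] at h0
  exact (mem_support_iff.mp he) h0

lemma binomial_mem_aux {α : Fin k → Fin d → ℕ} {e e' : Fin (k+1) →₀ ℕ}
    (h : piH α e = piH α e') (hle : e' 0 ≤ e 0) (c : 𝕂) :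
    (monomial e c - monomial e' c : MvPolynomial (Fin (k+1)) 𝕂) ∈ idealGH 𝕂 α := by
  set z := fun l : Fin k => e l.succ with hz
  set w := fun l : Fin k => e' l.succ with hw
  have heq : expTY (e 0) z = e := expTY_eta e
  have heq' : expTY (e' 0) w = e' := expTY_eta e'
  have h2 : piH α (expTY (e 0) z) = piH α (expTY (e' 0) w) := by rw [heq, heq', h]
  rw [piH_expTY, piH_expTY, Prod.mk.injEq] at h2
  obtain ⟨hlen, hphi⟩ := h2
  have hzw : len z ≤ len w := by omega
  have hgen : (monoT 𝕂 (len w - len z) z - monoT 𝕂 0 w : MvPolynomial (Fin (k+1)) 𝕂)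
      ∈ idealGH 𝕂 α :=
    Ideal.subset_span ⟨z, w, hphi, hzw, rfl⟩
  have hkey : (monomial (Finsupp.single 0 (e' 0)) c : MvPolynomial (Fin (k+1)) 𝕂) *
      (monoT 𝕂 (len w - len z) z - monoT 𝕂 0 w) = monomial e c - monomial e' c := by
    rw [mul_sub, monoT, monoT, monomial_mul, monomial_mul, mul_one]
    have h3 : Finsupp.single (0 : Fin (k+1)) (e' 0) + expTY (len w - len z) z = e := by
      rw [single_add_expTY, show e' 0 + (len w - len z) = e 0 by omega, heq]
    have h4 : Finsupp.single (0 : Fin (k+1)) (e' 0) + expTY 0 w = e' := by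
      rw [single_add_expTY, add_zero, heq']
    rw [h3, h4]
  rw [← hkey]
  exact Ideal.mul_mem_left _ _ hgen

/-- key binomial membership: two monomials of the same `Γ_H`-degree differ by
an element of the toric ideal. -/
lemma binomial_mem {α : Fin k → Fin d → ℕ} {e e' : Fin (k+1) →₀ ℕ}
    (h : piH α e = piH α e') (c : 𝕂) :
    (monomial e c - monomial e' c : MvPolynomial (Fin (k+1)) 𝕂) ∈ idealGH 𝕂 α := by
  rcases le_total (e' 0) (e 0) with hle | hle
  · exact binomial_mem_aux h hle c
  · rw [← neg_sub]
    exact (idealGH 𝕂 α).neg_mem (binomial_mem_aux h.symm hle c)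

end Aux3
section Aux4
open MvPolynomial

variable {𝕂 : Type*} [Field 𝕂] {d k : ℕ}

lemma leadExp_mem {f : MvPolynomial (Fin (k+1)) 𝕂} (hf : f ≠ 0) :
    leadExp f ∈ f.support := by
  obtain ⟨a, ha, hsup⟩ := Finset.exists_mem_eq_sup f.support
    (MvPolynomial.support_nonempty.mpr hf) toLex
  rw [leadExp, hsup]
  exact ha

lemma toLex_le_leadExp {f : MvPolynomial (Fin (k+1)) 𝕂} {m : Fin (k+1) →₀ ℕ}
    (hm : m ∈ f.support) : toLex m ≤ toLex (leadExp f) := by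
  rw [leadExp]
  exact Finset.le_sup hm

lemma support_binomial {a b : Fin (k+1) →₀ ℕ} (hab : a ≠ b) :
    (monomial a (1:𝕂) - monomial b 1).support = {a, b} := by
  apply Finset.ext
  intro x
  simp only [mem_support_iff, coeff_sub, coeff_monomial, Finset.mem_insert,
    Finset.mem_singleton]
  rcases eq_or_ne a x with rfl | hax
  · simp [if_neg (fun h : b = a => hab h.symm)]
  · rcases eq_or_ne b x with rfl | hbx
    · simp [if_neg hax]
    · simp [if_neg hax, if_neg hbx, Ne.symm hax, Ne.symm hbx]

lemma leadExp_binomial {a b : Fin (k+1) →₀ ℕ} (h : toLex b < toLex a) :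
    leadExp (monomial a (1:𝕂) - monomial b 1) = a := by
  have hab : a ≠ b := fun hh => absurd (congrArg toLex hh).symm h.ne
  have hne : (monomial a (1:𝕂) - monomial b 1) ≠ 0 := by
    intro h0
    have hs := support_binomial (𝕂 := 𝕂) hab
    rw [h0] at hs
    simp only [MvPolynomial.support_zero] at hs
    have : a ∈ (∅ : Finset (Fin (k+1) →₀ ℕ)) := by rw [hs]; simp
    simp at this
  have hmem := leadExp_mem hne
  rw [support_binomial hab] at hmem
  have hamem : a ∈ (monomial a (1:𝕂) - monomial b 1).support := by
    rw [support_binomial hab]; simp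
  rcases Finset.mem_insert.mp hmem with h1 | h1
  · exact h1
  · exfalso
    rw [Finset.mem_singleton] at h1
    have := toLex_le_leadExp hamem
    rw [h1] at this
    exact absurd this h.not_ge
end Aux4

section Aux4b
open MvPolynomial
variable {𝕂 : Type*} [Field 𝕂] {k : ℕ}

lemma binomial_ne_zero {a b : Fin (k+1) →₀ ℕ} (hab : a ≠ b) :
    (monomial a (1:𝕂) - monomial b 1) ≠ 0 := by
  intro h0
  have hs := support_binomial (𝕂 := 𝕂) hab
  rw [h0] at hs
  have : a ∈ (∅ : Finset (Fin (k+1) →₀ ℕ)) := by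
    rw [show (∅ : Finset (Fin (k+1) →₀ ℕ)) = ({a, b} : Finset _) from by
      rw [← hs]; simp]
    simp
  simp at this
end Aux4b
section Aux5
open MvPolynomial

variable {𝕂 : Type*} [Field 𝕂] {d k : ℕ}

lemma exists_g_lead_le {α : Fin k → Fin d → ℕ} {G : Set (MvPolynomial (Fin (k+1)) 𝕂)}
    (hGB : IsGroebnerBasis (idealGH 𝕂 α) G) (hred : IsReducedGB G)
    {f : MvPolynomial (Fin (k+1)) 𝕂} (hfI : f ∈ idealGH 𝕂 α) (hf0 : f ≠ 0) :
    ∃ g ∈ G, leadExp g ≤ leadExp f := by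
  have h1 : initTerm f ∈ Ideal.span (initTerm '' {h | h ∈ idealGH 𝕂 α ∧ h ≠ 0}) :=
    Ideal.subset_span ⟨f, ⟨hfI, hf0⟩, rfl⟩
  rw [← hGB.2.2] at h1
  have himg : initTerm '' G = (fun e => monomial e (1:𝕂)) '' (leadExp '' G) := by
    rw [Set.image_image]
    apply Set.image_congr
    intro g hg
    rw [initTerm, hred.1 g hg]
  rw [himg] at h1
  have hsup : leadExp f ∈ (initTerm f).support := by
    rw [mem_support_iff, initTerm, coeff_monomial, if_pos rfl]
    exact mem_support_iff.mp (leadExp_mem hf0)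
  obtain ⟨si, hsi, hle⟩ := mem_ideal_span_monomial_image.mp h1 _ hsup
  obtain ⟨g, hg, rfl⟩ := hsi
  exact ⟨g, hg, hle⟩

end Aux5
section Aux6
open MvPolynomial

variable {𝕂 : Type*} [Field 𝕂] {d k : ℕ}

lemma structG {α : Fin k → Fin d → ℕ} {G : Set (MvPolynomial (Fin (k+1)) 𝕂)}
    (hGB : IsGroebnerBasis (idealGH 𝕂 α) G) (hred : IsReducedGB G)
    {g : MvPolynomial (Fin (k+1)) 𝕂} (hg : g ∈ G) :
    ∃ (j : ℕ) (z w : Fin k → ℕ), g = monoT 𝕂 j z - monoT 𝕂 0 w ∧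
      phi α z = phi α w ∧ len w = len z + j ∧ leadExp g = expTY j z ∧
      toLex (expTY 0 w) < toLex (expTY j z) := by
  have hmonic := hred.1 g hg
  have hg0 : g ≠ 0 := by intro h; rw [h] at hmonic; simp at hmonic
  have hgI : g ∈ idealGH 𝕂 α := hGB.1 hg
  set e := leadExp g with he_def
  have he : e ∈ g.support := leadExp_mem hg0
  obtain ⟨e', he', hne, hpi⟩ := exists_partner hgI he
  have hlt : toLex e' < toLex e :=
    lt_of_le_of_ne (toLex_le_leadExp he') (fun hh => hne (toLex.injective hh))
  have hbI : (monomial e (1:𝕂) - monomial e' 1) ∈ idealGH 𝕂 α := binomial_mem hpi.symm 1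
  -- Step 1: `g` is a binomial
  have hbin : g = monomial e (1:𝕂) - monomial e' 1 := by
    by_contra hcon
    set h := g - (monomial e (1:𝕂) - monomial e' 1) with hhdef
    have hh0 : h ≠ 0 := fun h0 => hcon (by rw [← sub_eq_zero]; exact h0)
    have hhI : h ∈ idealGH 𝕂 α := Ideal.sub_mem _ hgI hbI
    have hsupp : h.support ⊆ g.support.erase e := by
      intro x hx
      have hcx : coeff x h ≠ 0 := mem_support_iff.mp hx
      by_contra hnot
      rcases eq_or_ne x e with rfl | hxe
      · apply hcx
        rw [hhdef, coeff_sub, coeff_sub, coeff_monomial, coeff_monomial,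
          if_pos rfl, if_neg hne, hmonic]
        ring
      · have hxg : x ∉ g.support := fun hmem => hnot (Finset.mem_erase.mpr ⟨hxe, hmem⟩)
        apply hcx
        have hex : ¬ (e = x) := fun hh2 => hxe hh2.symm
        have he'x : ¬ (e' = x) := fun hh2 => hxg (hh2 ▸ he')
        rw [hhdef, coeff_sub, coeff_sub, coeff_monomial, coeff_monomial,
          if_neg hex, if_neg he'x]
        rw [mem_support_iff, not_not] at hxg
        rw [hxg]; ring
    obtain ⟨g₂, hg₂, hle2⟩ := exists_g_lead_le hGB hred hhI hh0
    have hlh := leadExp_mem hh0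
    have hlhg : leadExp h ∈ g.support := Finset.mem_of_mem_erase (hsupp hlh)
    rcases eq_or_ne g₂ g with rfl | hgne
    · have h1 : toLex e ≤ toLex (leadExp h) := Finsupp.toLex_monotone (he_def ▸ hle2)
      have h2 : toLex (leadExp h) ≤ toLex e := he_def ▸ toLex_le_leadExp hlhg
      exact (Finset.ne_of_mem_erase (hsupp hlh)) (toLex.injective (le_antisymm h2 h1))
    · exact (hred.2 g hg g₂ hg₂ hgne (leadExp h) hlhg) hle2
  -- notation
  set i := e 0 with hidef
  set i' := e' 0 with hi'def
  set z := fun l : Fin k => e l.succ with hzdef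
  set w := fun l : Fin k => e' l.succ with hwdef
  have heta : expTY i z = e := expTY_eta e
  have heta' : expTY i' w = e' := expTY_eta e'
  have hii : i' ≤ i := by
    by_contra hii
    push_neg at hii
    have hlt' : toLex e < toLex e' := Finsupp.Lex.lt_iff.mpr ⟨0,
      (fun j hj => absurd hj ((Fin.zero_le j).not_gt)), (by simpa using hii)⟩
    exact hlt'.asymm hlt
  have hpi2 : (i' + len w, phi α w) = (i + len z, phi α z) := by
    rw [← piH_expTY α, ← piH_expTY α, heta, heta', hpi]
  rw [Prod.mk.injEq] at hpi2
  obtain ⟨hlen, hphi⟩ := hpi2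
  -- Step 2: the trailing exponent has no `t`
  have hi'0 : i' = 0 := by
    by_contra hi'
    have hπ2 : piH α (expTY (i - i') z) = piH α (expTY 0 w) := by
      rw [piH_expTY, piH_expTY, Prod.mk.injEq]
      exact ⟨by omega, hphi.symm⟩
    have hb2I := binomial_mem (𝕂 := 𝕂) hπ2 (1:𝕂)
    have ha : expTY (i - i') z + Finsupp.single 0 i' = e := by
      rw [expTY_add_single, show i - i' + i' = i by omega, heta]
    have hb : expTY 0 w + Finsupp.single 0 i' = e' := by
      rw [expTY_add_single, zero_add, heta']
    have hlt2 : toLex (expTY 0 w) < toLex (expTY (i - i') z) := by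
      have h5 := hlt
      rw [← ha, ← hb, toLex_add, toLex_add] at h5
      exact lt_of_add_lt_add_right h5
    have hne2 : expTY (i - i') z ≠ expTY 0 w :=
      fun hh => hlt2.ne (congrArg toLex hh).symm
    obtain ⟨g₂, hg₂, hle2⟩ := exists_g_lead_le hGB hred hb2I (binomial_ne_zero hne2)
    rw [leadExp_binomial hlt2] at hle2
    have hle3 : leadExp g₂ ≤ e :=
      le_trans hle2 (by rw [← heta]; exact expTY_le_iff.mpr ⟨by omega, fun l => le_refl _⟩)
    rcases eq_or_ne g₂ g with rfl | hgne
    · have h6 : e ≤ expTY (i - i') z := he_def ▸ hle2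
      rw [← heta] at h6
      have := (expTY_le_iff.mp h6).1
      omega
    · exact (hred.2 g hg g₂ hg₂ hgne e he) hle3
  have hew : expTY 0 w = e' := by rw [← heta', hi'0]
  refine ⟨i, z, w, ?_, hphi.symm, by omega, ?_, ?_⟩
  · rw [hbin, monoT, monoT, heta, hew]
  · exact heta.symm
  · rw [hew, heta]; exact hlt
end Aux6
section Aux7
open MvPolynomial

variable {𝕂 : Type*} [Field 𝕂] {d k : ℕ}

lemma phi_add (α : Fin k → Fin d → ℕ) (u v : Fin k → ℕ) :
    phi α (u + v) = phi α u + phi α v := by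
  simp [phi, add_smul, Finset.sum_add_distrib]

lemma len_add (u v : Fin k → ℕ) : len (u + v) = len u + len v := by
  simp [len, Finset.sum_add_distrib]

lemma monoT_eq (i : ℕ) (z : Fin k → ℕ) :
    monoT 𝕂 i z = MvPolynomial.monomial (expTY i z) 1 := rfl

end Aux7
/-- If `G` is a reduced Gröbner basis of `I_{Γ_H}` w.r.t. the lex order with `t`
greatest, then `Δ(Γ) = { j ≥ 1 : t^j y^z − y^w ∈ G for some z, w ∈ ℕ^k }`. -/
theorem stmt6 (𝕂 : Type*) [Field 𝕂] {d k : ℕ} (α : Fin k → Fin d → ℕ)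
    (hne : ∀ i, α i ≠ 0)
    (hmin : ∀ i, α i ∉ AddSubmonoid.closure (α '' {j | j ≠ i}))
    (G : Set (MvPolynomial (Fin (k + 1)) 𝕂))
    (hGB : IsGroebnerBasis (idealGH 𝕂 α) G)
    (hred : IsReducedGB G) :
    deltaSet α =
      {j : ℕ | 1 ≤ j ∧ ∃ z w : Fin k → ℕ, monoT 𝕂 j z - monoT 𝕂 0 w ∈ G} := by
  open MvPolynomial in
  apply Set.eq_of_subset_of_subset
  · -- Δ(Γ) ⊆ degrees in G
    intro δ hδ
    rw [deltaSet, Set.mem_iUnion₂] at hδ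
    obtain ⟨γ, hγ, hpos, a, haL, haδL, hsep⟩ := hδ
    obtain ⟨z₁, hz₁, hz₁len⟩ := haL
    obtain ⟨w₀, hw₀, hw₀len⟩ := haδL
    -- choose a lex-minimal factorization of length `a`
    have hwf : WellFounded ((· < ·) : Lex (Fin (k+1) →₀ ℕ) → Lex (Fin (k+1) →₀ ℕ) → Prop) :=
      IsWellFounded.wf
    obtain ⟨x, hxT, hxmin⟩ := hwf.has_min
      ((fun u => toLex (expTY 0 u)) '' {u | phi α u = γ ∧ len u = a})
      ⟨_, ⟨z₁, ⟨hz₁, hz₁len⟩, rfl⟩⟩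
    obtain ⟨z, ⟨hzφ, hzlen⟩, rfl⟩ := hxT
    have hfI : (monoT 𝕂 δ z - monoT 𝕂 0 w₀) ∈ idealGH 𝕂 α := by
      apply Ideal.subset_span
      refine ⟨z, w₀, hzφ.trans hw₀.symm, by omega, ?_⟩
      rw [show len w₀ - len z = δ by omega]
    have hltf : toLex (expTY 0 w₀) < toLex (expTY δ z) := toLex_expTY_lt hpos _ _
    have hnef : expTY δ z ≠ expTY 0 w₀ := fun hh => hltf.ne (congrArg toLex hh).symm
    rw [monoT_eq, monoT_eq] at hfI
    obtain ⟨g, hgG, hgle⟩ := exists_g_lead_le hGB hred hfI (binomial_ne_zero hnef)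
    rw [leadExp_binomial hltf] at hgle
    obtain ⟨j, z', w', hgform, hgφ, hglen, hglead, hgtail⟩ := structG hGB hred hgG
    rw [hglead] at hgle
    obtain ⟨hjδ, hz'z⟩ := expTY_le_iff.mp hgle
    have hz'z' : (fun l => z l - z' l) + z' = z := funext fun l => Nat.sub_add_cancel (hz'z l)
    have hφu : phi α ((fun l => z l - z' l) + w') = γ := by
      rw [phi_add, ← hgφ, ← phi_add, hz'z', hzφ]
    have hlen2 : len ((fun l => z l - z' l) + z') = a := by rw [hz'z', hzlen]
    rw [len_add] at hlen2
    have hlenu : len ((fun l => z l - z' l) + w') = a + j := by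
      rw [len_add]; omega
    rcases Nat.eq_zero_or_pos j with hj0 | hjpos
    · exfalso
      subst hj0
      have hlt3 : toLex (expTY 0 ((fun l => z l - z' l) + w')) < toLex (expTY 0 z) := by
        conv_rhs => rw [← hz'z']
        rw [show (0:ℕ) = 0 + 0 from rfl, ← expTY_add, ← expTY_add, toLex_add, toLex_add]
        exact add_lt_add_right hgtail _
      exact hxmin _ ⟨_, ⟨hφu, by omega⟩, rfl⟩ hlt3
    · have hjeq : j = δ := by
        have huL : (a + j) ∈ lengthSet α γ := ⟨_, hφu, hlenu⟩
        have := hsep (a + j) huL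
        omega
      exact ⟨hpos, z', w', by rw [← hjeq]; rw [← hgform]; exact hgG⟩
  · -- degrees in G ⊆ Δ(Γ)
    rintro δ ⟨hδ1, zz, ww, hmem⟩
    obtain ⟨j₂, z₂, w₂, hgform, hφ, hlen, hglead, hgtail⟩ := structG hGB hred hmem
    have ha1b1 : expTY δ zz ≠ expTY 0 ww := by
      intro hh
      have := (expTY_inj hh).1; omega
    have ha2b2 : expTY j₂ z₂ ≠ expTY 0 w₂ := fun hh => hgtail.ne (congrArg toLex hh).symm
    have hsets : ({expTY δ zz, expTY 0 ww} : Finset (Fin (k+1) →₀ ℕ))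
        = {expTY j₂ z₂, expTY 0 w₂} := by
      rw [← support_binomial (𝕂 := 𝕂) ha1b1, ← support_binomial (𝕂 := 𝕂) ha2b2,
        ← monoT_eq, ← monoT_eq, ← monoT_eq, ← monoT_eq, hgform]
    have hmem1 : expTY δ zz = expTY j₂ z₂ := by
      have : expTY δ zz ∈ ({expTY j₂ z₂, expTY 0 w₂} : Finset (Fin (k+1) →₀ ℕ)) := by
        rw [← hsets]; simp
      rcases Finset.mem_insert.mp this with h1 | h1
      · exact h1
      · exfalso
        rw [Finset.mem_singleton] at h1
        have := (expTY_inj h1).1; omega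
    obtain ⟨hδj₂, hzz⟩ := expTY_inj hmem1
    subst hδj₂
    have hmem2 : expTY 0 ww = expTY 0 w₂ := by
      have : expTY 0 ww ∈ ({expTY δ z₂, expTY 0 w₂} : Finset (Fin (k+1) →₀ ℕ)) := by
        rw [← hsets]; simp
      rcases Finset.mem_insert.mp this with h1 | h1
      · exfalso
        have := (expTY_inj h1).1; omega
      · rwa [Finset.mem_singleton] at h1
    have hww : ww = w₂ := (expTY_inj hmem2).2
    subst hzz
    subst hww
    -- now `phi zz = phi ww`, `len ww = len zz + δ`
    rw [deltaSet, Set.mem_iUnion₂]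
    refine ⟨phi α zz, ⟨zz, rfl⟩, by omega, len zz, ⟨zz, rfl, rfl⟩, ⟨ww, hφ.symm, by omega⟩, ?_⟩
    rintro c ⟨u, huφ, rfl⟩ ⟨hc1, hc2⟩
    have hbI : (monoT 𝕂 (len u - len zz) zz - monoT 𝕂 0 u) ∈ idealGH 𝕂 α :=
      Ideal.subset_span ⟨zz, u, huφ.symm, by omega, rfl⟩
    have hltu : toLex (expTY 0 u) < toLex (expTY (len u - len zz) zz) :=
      toLex_expTY_lt (by omega) _ _
    have hneu : expTY (len u - len zz) zz ≠ expTY 0 u :=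
      fun hh => hltu.ne (congrArg toLex hh).symm
    rw [monoT_eq, monoT_eq] at hbI
    obtain ⟨g₂, hg₂, hgle⟩ := exists_g_lead_le hGB hred hbI (binomial_ne_zero hneu)
    rw [leadExp_binomial hltu] at hgle
    have hgle2 : leadExp g₂ ≤ expTY δ zz :=
      le_trans hgle (expTY_le_iff.mpr ⟨by omega, fun l => le_refl _⟩)
    have hmemsupp : expTY δ zz ∈ (monoT 𝕂 δ zz - monoT 𝕂 0 ww).support := by
      rw [monoT_eq, monoT_eq, support_binomial ha1b1]; simp
    rcases eq_or_ne g₂ (monoT 𝕂 δ zz - monoT 𝕂 0 ww) with rfl | hgne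
    · rw [hglead] at hgle
      have := (expTY_le_iff.mp hgle).1
      omega
    · exact (hred.2 _ hmem g₂ hg₂ hgne _ hmemsupp) hgle2
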